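/- Assume the connectivity graph G^H is connected, fix n̄ ∈ {1,…,d} and positive reals λ_n > 0 for n ≠ n̄, set λ_{n̄} = −Σ_{n ≠ n̄} λ_n, let σ ∈ ℝ^d satisfy R^H σ = −λ, and let ε > 0 satisfy λ_n + ε((⟨n|H|n⟩)² − ⟨n|H²|n⟩) > 0 for all n ≠ n̄. Define W_ε(ρ) = Σ_{n=1}^d (σ_n ⟨n|ρ|n⟩ + (ε/4)(⟨n|ρ|n⟩)²). Then for every n ≠ n̄ and every ū > 0, there exists u with |u| ≤ ū such that W_ε(e^{−iuH} |n⟩⟨n| e^{iuH}) > W_ε(|n⟩⟨n|); that is, u = 0 is a strict local minimum of u ↦ W_ε(e^{−iuH} |n⟩⟨n| e^{iuH}) for every n ≠ n̄. -/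

import Mathlib

open Matrix BigOperators

/-- `U_u = e^{−iuH}`, the matrix exponential of `−iuH`. -/
noncomputable def Uu {d : ℕ} (H : Matrix (Fin d) (Fin d) ℂ) (u : ℝ) :
    Matrix (Fin d) (Fin d) ℂ :=
  NormedSpace.exp ((-(Complex.I * (u : ℂ))) • H)

/-- The Laplacian matrix `R^H` with entries
`R^H_{n₁,n₂} = 2(δ_{n₁,n₂}⟨n₁|H²|n₂⟩ − |⟨n₁|H|n₂⟩|²)`. -/
noncomputable def RH {d : ℕ} (H : Matrix (Fin d) (Fin d) ℂ) : Matrix (Fin d) (Fin d) ℝ :=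
  Matrix.of fun n₁ n₂ =>
    2 * ((if n₁ = n₂ then ((H * H) n₁ n₂).re else 0) - Complex.normSq (H n₁ n₂))

/-- The connectivity graph `G^H`: vertices `{1,…,d}`, edge between `n₁ ≠ n₂` iff
`⟨n₁|H|n₂⟩ ≠ 0`. -/
def GH {d : ℕ} (H : Matrix (Fin d) (Fin d) ℂ) : SimpleGraph (Fin d) :=
  SimpleGraph.fromRel fun n₁ n₂ => H n₁ n₂ ≠ 0

/-- `W_ε(ρ) = Σ_n (σ_n ⟨n|ρ|n⟩ + (ε/4)(⟨n|ρ|n⟩)²)`. -/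
noncomputable def Weps {d : ℕ} (σ : Fin d → ℝ) (ε : ℝ)
    (ρ : Matrix (Fin d) (Fin d) ℂ) : ℝ :=
  ∑ k, (σ k * (ρ k k).re + (ε / 4) * (ρ k k).re ^ 2)


attribute [local instance]
  Matrix.linftyOpNormedAddCommGroup Matrix.linftyOpNormedRing Matrix.linftyOpNormedAlgebra

/-- Auxiliary: if `F' (0) = 0` and `F''(0) > 0` (in the `HasDerivAt` sense), then
arbitrarily close to `0` there are points where `F` exceeds `F 0`. -/
lemma exists_gt_of_second_deriv_pos (F F1 : ℝ → ℝ)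
    (hF : ∀ u, HasDerivAt F (F1 u) u) (h0 : F1 0 = 0)
    {c : ℝ} (hc : 0 < c) (hF1 : HasDerivAt F1 c 0)
    (ubar : ℝ) (hub : 0 < ubar) : ∃ u : ℝ, |u| ≤ ubar ∧ F 0 < F u := by
  have hslope : Filter.Tendsto (fun u => F1 u / u) (nhdsWithin 0 {(0:ℝ)}ᶜ) (nhds c) := by
    have h := hasDerivAt_iff_tendsto_slope.mp hF1
    have heq : slope F1 0 = fun u => F1 u / u := by
      funext u; simp [slope, h0, div_eq_inv_mul]
    rwa [heq] at h
  have hslope' : ∀ᶠ u in nhdsWithin (0:ℝ) (Set.Ioi 0), F1 u / u > c/2 := by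
    have h1 : Filter.Tendsto (fun u => F1 u / u) (nhdsWithin 0 (Set.Ioi 0)) (nhds c) :=
      hslope.mono_left (nhdsWithin_mono _ (fun x hx => by simp at hx ⊢; exact ne_of_gt hx))
    exact h1.eventually (eventually_gt_nhds (by linarith))
  rw [eventually_nhdsWithin_iff, Metric.eventually_nhds_iff] at hslope'
  obtain ⟨δ, hδ, hδ'⟩ := hslope'
  set u0 : ℝ := min ubar (δ/2) with hu0
  have hu0pos : 0 < u0 := lt_min hub (by linarith)
  have hpos : ∀ x ∈ Set.Ioo (0:ℝ) u0, 0 < F1 x := by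
    intro x hx
    have hxδ : dist x 0 < δ := by
      rw [Real.dist_eq, sub_zero, abs_of_pos hx.1]
      have : u0 ≤ δ/2 := min_le_right _ _
      linarith [hx.2]
    have := hδ' hxδ (Set.mem_Ioi.mpr hx.1)
    have hcx : 0 < F1 x / x := lt_trans (by linarith) this
    exact (div_pos_iff.mp hcx).elim (fun h => h.1) (fun h => absurd h.2 (not_lt.mpr hx.1.le))
  have hmono : StrictMonoOn F (Set.Icc 0 u0) := by
    apply strictMonoOn_of_deriv_pos (convex_Icc _ _)
    · exact (fun x _ => ((hF x).differentiableAt.continuousAt.continuousWithinAt))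
    · intro x hx
      rw [interior_Icc] at hx
      rw [(hF x).deriv]
      exact hpos x hx
  refine ⟨u0, ?_, ?_⟩
  · rw [abs_of_pos hu0pos]; exact min_le_left _ _
  · exact hmono (Set.left_mem_Icc.mpr hu0pos.le) (Set.right_mem_Icc.mpr hu0pos.le) hu0pos

/-- Auxiliary: entry of a matrix as a continuous `ℝ`-linear map. -/
noncomputable def entryCLM {d : ℕ} (k n : Fin d) : Matrix (Fin d) (Fin d) ℂ →L[ℝ] ℂ :=
  LinearMap.toContinuousLinearMap (Matrix.entryLinearMap ℝ ℂ k n)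

/-- under the hypotheses of Theorem 3, for every `n ≠ n̄` and every `ū > 0`
there exists `u` with `|u| ≤ ū` such that
`W_ε(e^{−iuH}|n⟩⟨n|e^{iuH}) > W_ε(|n⟩⟨n|)`. -/
theorem stmt_15 (d : ℕ) (hd : 1 ≤ d) (H : Matrix (Fin d) (Fin d) ℂ)
    (hH : H.IsHermitian) (hconn : (GH H).Connected)
    (nbar : Fin d) (lam : Fin d → ℝ)
    (hpos : ∀ n, n ≠ nbar → 0 < lam n)
    (hbar : lam nbar = -∑ n ∈ Finset.univ.erase nbar, lam n)
    (σ : Fin d → ℝ) (hσ : (RH H).mulVec σ = -lam)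
    (ε : ℝ) (hε : 0 < ε)
    (hεsmall : ∀ n, n ≠ nbar →
      0 < lam n + ε * ((H n n).re ^ 2 - ((H * H) n n).re)) :
    ∀ n, n ≠ nbar → ∀ ubar : ℝ, 0 < ubar →
      ∃ u : ℝ, |u| ≤ ubar ∧
        Weps σ ε (Uu H u * Matrix.single n n 1 * (Uu H u)ᴴ) >
          Weps σ ε (Matrix.single n n 1) := by
  intro n hn ubar hub
  classical
  -- Hermitian facts
  have hHim : ∀ i j : Fin d, (H i j).im = -(H j i).im := by
    intro i j
    have h := hH.apply j i
    have h2 : -(H i j).im = (H j i).im := by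
      simpa [Complex.star_def] using congrArg Complex.im h
    linarith
  have hHnn_im : (H n n).im = 0 := by
    have := hHim n n; linarith
  have hHsq : ∀ i j : Fin d, Complex.normSq (H i j) = Complex.normSq (H j i) := by
    intro i j
    have h := hH.apply j i
    rw [← h, Complex.star_def, Complex.normSq_conj]
  set A : Matrix (Fin d) (Fin d) ℂ := (-Complex.I) • H with hA
  have hUu : ∀ u : ℝ, Uu H u = NormedSpace.exp (u • A) := by
    intro u
    rw [Uu]
    congr 1
    ext i j
    simp [hA, Matrix.smul_apply, Complex.real_smul]
    ring
  set g : ℝ → Matrix (Fin d) (Fin d) ℂ := fun u => NormedSpace.exp (u • A) with hgdef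
  have hgd : ∀ u, HasDerivAt g (g u * A) u := fun u => hasDerivAt_exp_smul_const A u
  set a : Fin d → ℝ → ℂ := fun k u => g u k n with hadef
  set b : Fin d → ℝ → ℂ := fun k u => (g u * A) k n with hbdef
  set cc : Fin d → ℝ → ℂ := fun k u => (g u * A * A) k n with hccdef
  have hab : ∀ k u, HasDerivAt (a k) (b k u) u := by
    intro k u
    exact (entryCLM k n).hasFDerivAt.comp_hasDerivAt u (hgd u)
  have hbc : ∀ k u, HasDerivAt (b k) (cc k u) u := by
    intro k u
    exact (entryCLM k n).hasFDerivAt.comp_hasDerivAt u ((hgd u).mul_const A)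
  have haR : ∀ k u, HasDerivAt (fun u => (a k u).re) ((b k u).re) u := fun k u =>
    Complex.reCLM.hasFDerivAt.comp_hasDerivAt u (hab k u)
  have haI : ∀ k u, HasDerivAt (fun u => (a k u).im) ((b k u).im) u := fun k u =>
    Complex.imCLM.hasFDerivAt.comp_hasDerivAt u (hab k u)
  have hbR : ∀ k u, HasDerivAt (fun u => (b k u).re) ((cc k u).re) u := fun k u =>
    Complex.reCLM.hasFDerivAt.comp_hasDerivAt u (hbc k u)
  have hbI : ∀ k u, HasDerivAt (fun u => (b k u).im) ((cc k u).im) u := fun k u =>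
    Complex.imCLM.hasFDerivAt.comp_hasDerivAt u (hbc k u)
  set p : Fin d → ℝ → ℝ := fun k u => (a k u).re * (a k u).re + (a k u).im * (a k u).im
    with hpdef
  set q : Fin d → ℝ → ℝ :=
    fun k u => 2 * ((a k u).re * (b k u).re + (a k u).im * (b k u).im) with hqdef
  set r : Fin d → ℝ → ℝ :=
    fun k u => 2 * ((b k u).re * (b k u).re + (a k u).re * (cc k u).re
      + (b k u).im * (b k u).im + (a k u).im * (cc k u).im) with hrdef
  have hpq : ∀ k u, HasDerivAt (p k) (q k u) u := by
    intro k u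
    have h := (((haR k u).fun_mul (haR k u)).fun_add ((haI k u).fun_mul (haI k u)))
    exact h.congr_deriv (by simp only [hqdef]; ring)
  have hqr : ∀ k u, HasDerivAt (q k) (r k u) u := by
    intro k u
    have h := ((((haR k u).fun_mul (hbR k u)).fun_add ((haI k u).fun_mul (hbI k u))).const_mul (2:ℝ))
    exact h.congr_deriv (by simp only [hrdef]; ring)
  -- the explicit first derivative
  set F1 : ℝ → ℝ :=
    fun u => ∑ k, (σ k * q k u + (ε/4) * (2 * p k u * q k u)) with hF1def
  have hW : ∀ u, HasDerivAt
      (fun u => ∑ k, (σ k * p k u + (ε/4) * (p k u * p k u))) (F1 u) u := by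
    intro u
    apply HasDerivAt.fun_sum
    intro k _
    have h := (((hpq k u).const_mul (σ k)).fun_add
      (((hpq k u).fun_mul (hpq k u)).const_mul (ε/4)))
    convert h using 1
    ring
  -- values at 0
  have hg0 : g 0 = 1 := by simp [hgdef, NormedSpace.exp_zero]
  have ha0 : ∀ k, a k 0 = if k = n then 1 else 0 := by
    intro k; simp [hadef, hg0, Matrix.one_apply]
  have hb0 : ∀ k, b k 0 = A k n := by intro k; simp [hbdef, hg0]
  have hc0 : ∀ k, cc k 0 = (A * A) k n := by intro k; simp [hccdef, hg0]
  have hAkn : ∀ k, A k n = -(Complex.I * H k n) := by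
    intro k; simp [hA, Matrix.smul_apply]
  have hAA : ∀ k, (A * A) k n = -((H * H) k n) := by
    intro k
    have h : A * A = (-1 : ℂ) • (H * H) := by
      rw [hA, smul_mul_assoc, mul_smul_comm, smul_smul]
      norm_num [Complex.I_mul_I]
    simp [h, Matrix.smul_apply]
  have hq0 : ∀ k, q k 0 = 0 := by
    intro k
    by_cases hk : k = n
    · subst hk
      simp [hqdef, ha0, hb0, hAkn, Complex.mul_re, hHnn_im]
    · simp [hqdef, ha0, hk]
  have hp0 : ∀ k, p k 0 = if k = n then 1 else 0 := by
    intro k; by_cases hk : k = n <;> simp [hpdef, ha0, hk]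
  have hr0 : ∀ k, r k 0 = -(RH H k n) := by
    intro k
    by_cases hk : k = n <;>
      simp [hrdef, RH, hk, ha0, hb0, hc0, hAkn, hAA, Complex.normSq_apply,
        Complex.mul_re, Complex.mul_im] <;> try ring
  -- the second derivative at 0
  set c₀ : ℝ := lam n + ε * ((H n n).re ^ 2 - ((H * H) n n).re) with hc₀def
  have hc₀pos : 0 < c₀ := hεsmall n hn
  have hF1d : HasDerivAt F1 c₀ 0 := by
    have hder : HasDerivAt F1
        (∑ k, (σ k * r k 0 + (ε/4) * (2 * q k 0 * q k 0 + 2 * p k 0 * r k 0))) 0 := by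
      apply HasDerivAt.fun_sum
      intro k _
      have h := (((hqr k 0).const_mul (σ k)).fun_add
        ((((hpq k 0).const_mul (2:ℝ)).fun_mul (hqr k 0)).const_mul (ε/4)))
      convert h using 1
      try ring
    have hval : (∑ k, (σ k * r k 0 + (ε/4) * (2 * q k 0 * q k 0 + 2 * p k 0 * r k 0)))
        = c₀ := by
      have hterm : ∀ k ∈ Finset.univ, σ k * r k 0 + (ε/4) * (2 * q k 0 * q k 0
          + 2 * p k 0 * r k 0)
          = -(RH H n k * σ k) + (if k = n then (ε/2) * (-(RH H n n)) else 0) := by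
        intro k _
        rw [hq0, hr0, hp0]
        have hsymm : RH H k n = RH H n k := by
          by_cases hk : k = n
          · subst hk; rfl
          · simp [RH, hk, Ne.symm hk, hHsq k n]
        rw [hsymm]
        by_cases hk : k = n
        · subst hk; simp; ring
        · simp [hk]; try ring
      rw [Finset.sum_congr rfl hterm, Finset.sum_add_distrib, Finset.sum_ite_eq',
        if_pos (Finset.mem_univ n)]
      have hmv : ∑ k, RH H n k * σ k = -lam n := by
        have := congrFun hσ n
        simpa [Matrix.mulVec, dotProduct] using this
      have hsum : ∑ k, -(RH H n k * σ k) = lam n := by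
        rw [Finset.sum_neg_distrib, hmv, neg_neg]
      rw [hsum, hc₀def]
      have hRHnn : RH H n n = 2 * (((H * H) n n).re - Complex.normSq (H n n)) := by
        simp [RH]
      rw [hRHnn]
      have : Complex.normSq (H n n) = (H n n).re ^ 2 := by
        rw [Complex.normSq_apply, hHnn_im]; ring
      rw [this]; ring
    rw [← hval]
    exact hder
  have h0 : F1 0 = 0 := by
    simp only [hF1def]
    apply Finset.sum_eq_zero
    intro k _
    rw [hq0]; ring
  -- relate the goal function to the explicit sum
  have hFeq : (fun u => Weps σ ε (Uu H u * Matrix.single n n 1 * (Uu H u)ᴴ))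
      = fun u => ∑ k, (σ k * p k u + (ε/4) * (p k u * p k u)) := by
    funext u
    rw [Weps]
    apply Finset.sum_congr rfl
    intro k _
    have hdiag : ((Uu H u * Matrix.single n n 1 * (Uu H u)ᴴ)
        : Matrix (Fin d) (Fin d) ℂ) k k = (g u k n) * star (g u k n) := by
      rw [hUu u]
      simp [Matrix.mul_apply, Matrix.single, Matrix.conjTranspose_apply,
        Finset.sum_ite_eq, ite_and, mul_comm, hgdef]
    rw [hdiag]
    have : ((g u k n) * star (g u k n)).re = p k u := by
      simp [hpdef, hadef, Complex.mul_re, Complex.star_def]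
      try ring
    rw [this]
    try ring
  have hFd : ∀ u, HasDerivAt
      (fun u => Weps σ ε (Uu H u * Matrix.single n n 1 * (Uu H u)ᴴ)) (F1 u) u := by
    rw [hFeq]; exact hW
  obtain ⟨u, hu, hgt⟩ := exists_gt_of_second_deriv_pos _ F1 hFd h0 hc₀pos hF1d ubar hub
  refine ⟨u, hu, ?_⟩
  have hU0 : Uu H 0 = 1 := by
    rw [Uu]
    norm_num [NormedSpace.exp_zero]
  rw [hU0] at hgt
  simpa using hgt
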